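/- In any multipartite tournament with no 2-Duke that contains at least three distinct 3-Dukes, there exists a fourth distinct 3-Duke. -/
import Mathlib


/-- An orientation of a complete multipartite graph: vertices `V`, partite sets
given as fibers of `part : V → ι`, and `peck` the arc relation. Between any two
vertices in different partite sets there is exactly one arc, and there are no
arcs within a partite set. -/
structure MTour (V : Type*) (ι : Type*) where
  part : V → ι
  peck : V → V → Prop
  complete : ∀ u v, part u ≠ part v → peck u v ∨ peck v u
  inter : ∀ u v, peck u v → part u ≠ part v
  asymm : ∀ u v, peck u v → ¬ peck v u

namespace MTour

variable {V ι : Type*}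

/-- There is a directed path of length at most `m` from `d` to `c`. -/
def hasPath (T : MTour V ι) (m : ℕ) (d c : V) : Prop :=
  ∃ k ≤ m, ∃ f : ℕ → V, f 0 = d ∧ f k = c ∧ ∀ i < k, T.peck (f i) (f (i + 1))

/-- `d` is an `m`-Duke: every vertex in a different partite set is reachable
from `d` by a directed path of length at most `m`. -/
def isDuke (T : MTour V ι) (m : ℕ) (d : V) : Prop :=
  ∀ c, T.part c ≠ T.part d → T.hasPath m d c

/-- `d` is an `m`-King: every other vertex is reachable from `d` by a directed
path of length at most `m`. -/
def isKing (T : MTour V ι) (m : ℕ) (d : V) : Prop :=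
  ∀ c, c ≠ d → T.hasPath m d c

/-- The out-degree of a vertex. -/
noncomputable def outDeg (T : MTour V ι) (v : V) : ℕ :=
  Nat.card {w // T.peck v w}

/-- `e` eclipses `d`: same partite set, `e` pecks everything `d` pecks, and
at least one vertex `d` does not peck. -/
def eclipses (T : MTour V ι) (e d : V) : Prop :=
  T.part e = T.part d ∧ (∀ c, T.peck d c → T.peck e c) ∧ ∃ c, T.peck e c ∧ ¬ T.peck d c

/-- `d` is non-eclipsed: no vertex of its partite set eclipses it. -/
def nonEclipsed (T : MTour V ι) (d : V) : Prop :=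
  ∀ e, ¬ T.eclipses e d

/-- Partite set `i` dominates partite set `j`: some vertex of `i` pecks all of `j`. -/
def Dominates (T : MTour V ι) (i j : ι) : Prop :=
  ∃ v, T.part v = i ∧ ∀ w, T.part w = j → T.peck v w

end MTour

namespace MTour

variable {V ι : Type*} (T : MTour V ι)

lemma path_one {m : ℕ} (hm : 1 ≤ m) {a b : V} (h : T.peck a b) : T.hasPath m a b := by
  refine ⟨1, hm, fun i => if i = 0 then a else b, by simp, by simp, ?_⟩
  intro i hi
  interval_cases i
  simpa using h

lemma path_two {m : ℕ} (hm : 2 ≤ m) {a b c : V} (h1 : T.peck a b) (h2 : T.peck b c) :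
    T.hasPath m a c := by
  refine ⟨2, hm, fun i => if i = 0 then a else if i = 1 then b else c, by simp, by simp, ?_⟩
  intro i hi
  interval_cases i
  · simpa using h1
  · simpa using h2

lemma path_three {m : ℕ} (hm : 3 ≤ m) {a b c e : V} (h1 : T.peck a b) (h2 : T.peck b c)
    (h3 : T.peck c e) : T.hasPath m a e := by
  refine ⟨3, hm, fun i => if i = 0 then a else if i = 1 then b else if i = 2 then c else e,
    by simp, by simp, ?_⟩
  intro i hi
  interval_cases i
  · simpa using h1
  · simpa using h2
  · simpa using h3

lemma path2_cases {a c : V} (h : T.hasPath 2 a c) :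
    c = a ∨ T.peck a c ∨ ∃ w, T.peck a w ∧ T.peck w c := by
  obtain ⟨k, hk, f, h0, hkc, hp⟩ := h
  interval_cases k
  · left; rw [← hkc, h0]
  · right; left
    have := hp 0 (by norm_num)
    rwa [h0, hkc] at this
  · right; right
    refine ⟨f 1, ?_, ?_⟩
    · have := hp 0 (by norm_num); rwa [h0] at this
    · have := hp 1 (by norm_num); rwa [hkc] at this

lemma path_transfer {m : ℕ} {a b c : V} (hab : ∀ x, T.peck a x → T.peck b x)
    (h : T.hasPath m a c) : c = a ∨ T.hasPath m b c := by
  obtain ⟨k, hk, f, h0, hkc, hp⟩ := h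
  rcases Nat.eq_zero_or_pos k with rfl | hkpos
  · left; rw [← hkc, h0]
  · right
    have hk0 : k ≠ 0 := Nat.pos_iff_ne_zero.mp hkpos
    refine ⟨k, hk, fun i => if i = 0 then b else f i, by simp, ?_, ?_⟩
    · simp only [if_neg hk0]; exact hkc
    · intro i hi
      rcases Nat.eq_zero_or_pos i with rfl | hipos
      · simp only [if_pos rfl, if_neg one_ne_zero]
        exact hab _ (h0 ▸ hp 0 hi)
      · have hi0 : i ≠ 0 := Nat.pos_iff_ne_zero.mp hipos
        simp only [if_neg hi0, if_neg (by omega : i + 1 ≠ 0)]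
        exact hp i hi

lemma memB_facts {d u : V} (hup : T.part u ≠ T.part d) (hu2 : ¬ T.hasPath 2 d u) :
    T.peck u d ∧ ∀ w, T.peck d w → T.part w ≠ T.part u → T.peck u w := by
  constructor
  · have hdu : ¬ T.peck d u := fun h => hu2 (T.path_one one_le_two h)
    exact (T.complete u d hup).resolve_right hdu
  · intro w hw hwp
    have hwu : ¬ T.peck w u := fun h => hu2 (T.path_two le_rfl hw h)
    exact (T.complete u w (fun h => hwp h.symm)).resolve_right hwu

lemma caseA_facts {d u c : V} (hup : T.part u ≠ T.part d) (hu2 : ¬ T.hasPath 2 d u)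
    (hcp : T.part c ≠ T.part u) (hc3 : ¬ T.hasPath 3 u c) (hcd : T.part c ≠ T.part d) :
    (T.part c ≠ T.part d ∧ ¬ T.hasPath 2 d c) ∧ T.peck c u ∧
      (∀ s, T.peck u s → T.part s ≠ T.part c → T.peck c s) ∧
      (∀ w s, T.peck u w → T.peck w s → T.part s ≠ T.part c → T.peck c s) := by
  obtain ⟨hud, hpeckN⟩ := T.memB_facts hup hu2
  have hcu : T.peck c u := by
    have huc : ¬ T.peck u c := fun h => hc3 (T.path_one (by norm_num) h)
    exact (T.complete c u hcp).resolve_right huc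
  have hb : ∀ s, T.peck u s → T.part s ≠ T.part c → T.peck c s := by
    intro s hs hsp
    have hsc : ¬ T.peck s c := fun h => hc3 (T.path_two (by norm_num) hs h)
    exact (T.complete c s (fun h => hsp h.symm)).resolve_right hsc
  have h3 : ∀ w s, T.peck u w → T.peck w s → T.part s ≠ T.part c → T.peck c s := by
    intro w s h1 h2 hsp
    have hsc : ¬ T.peck s c := fun h => hc3 (T.path_three le_rfl h1 h2 h)
    exact (T.complete c s (fun h => hsp h.symm)).resolve_right hsc
  have hd2c : ¬ T.hasPath 2 d c := by
    intro h
    rcases T.path2_cases h with rfl | h | ⟨w, h1, h2⟩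
    · exact hc3 (T.path_one (by norm_num) hud)
    · exact hc3 (T.path_one (by norm_num) (hpeckN c h hcp))
    · by_cases hwp : T.part w = T.part u
      · exact hc3 (T.path_three le_rfl hud h1 h2)
      · exact hc3 (T.path_two (by norm_num) (hpeckN w h1 hwp) h2)
  exact ⟨⟨hcd, hd2c⟩, hcu, hb, h3⟩

lemma caseB_facts {d u c : V} (hup : T.part u ≠ T.part d) (hu2 : ¬ T.hasPath 2 d u)
    (hd : T.isDuke 3 d) (hcp : T.part c ≠ T.part u) (hc3 : ¬ T.hasPath 3 u c)
    (hcd : T.part c = T.part d) :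
    T.isDuke 3 c ∧ (∀ z, T.peck d z → T.peck c z) ∧ T.peck c u ∧ ¬ T.hasPath 2 d c ∧
      ¬ T.peck d u := by
  obtain ⟨hud, hpeckN⟩ := T.memB_facts hup hu2
  have hdu : ¬ T.peck d u := fun h => hu2 (T.path_one one_le_two h)
  have hcu : T.peck c u := by
    have huc : ¬ T.peck u c := fun h => hc3 (T.path_one (by norm_num) h)
    exact (T.complete c u hcp).resolve_right huc
  have hsub : ∀ z, T.peck d z → T.peck c z := by
    intro z hz
    have hzc : ¬ T.peck z c := fun h => hc3 (T.path_three le_rfl hud hz h)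
    have hpzc : T.part c ≠ T.part z := by rw [hcd]; exact T.inter d z hz
    exact (T.complete c z hpzc).resolve_right hzc
  have hcduke : T.isDuke 3 c := by
    intro x hx
    have hxd : T.part x ≠ T.part d := by rw [← hcd]; exact hx
    rcases T.path_transfer hsub (hd x hxd) with rfl | h
    · exact absurd hcd.symm hx
    · exact h
  have hd2c : ¬ T.hasPath 2 d c := by
    intro h
    rcases T.path2_cases h with rfl | h | ⟨w, h1, h2⟩
    · exact hdu hcu
    · exact (T.inter d c h) hcd.symm
    · exact T.asymm c w (hsub w h1) h2
  exact ⟨hcduke, hsub, hcu, hd2c, hdu⟩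

lemma outDeg_eq_ncard (d : V) : T.outDeg d = {w | T.peck d w}.ncard :=
  (Nat.card_coe_set_eq _).symm

lemma outDeg_lt_card [Fintype V] (d : V) : T.outDeg d < Fintype.card V := by
  have h2 : {w | T.peck d w} ⊂ Set.univ := by
    rw [Set.ssubset_univ_iff]
    intro h
    have : T.peck d d := by
      have hd : d ∈ {w | T.peck d w} := by rw [h]; trivial
      exact hd
    exact (T.inter d d this) rfl
  have := Set.ncard_lt_ncard h2 (Set.toFinite _)
  rw [Set.ncard_univ, Nat.card_eq_fintype_card] at this
  rw [T.outDeg_eq_ncard]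
  exact this

lemma outDeg_lt [Finite V] {d c u : V} (hsub : ∀ z, T.peck d z → T.peck c z)
    (hcu : T.peck c u) (hdu : ¬ T.peck d u) : T.outDeg d < T.outDeg c := by
  have hss : {w | T.peck d w} ⊂ {w | T.peck c w} :=
    ⟨fun z hz => hsub z hz, fun h => hdu (h hcu)⟩
  have := Set.ncard_lt_ncard hss (Set.toFinite _)
  rw [T.outDeg_eq_ncard, T.outDeg_eq_ncard]
  exact this

lemma crux [Finite V] (hno2 : ¬ ∃ x, T.isDuke 2 x) :
    ∀ d : V, T.isDuke 3 d → ∃ u, T.isDuke 3 u ∧ T.part u ≠ T.part d ∧ ¬ T.hasPath 2 d u := by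
  classical
  letI : Fintype V := Fintype.ofFinite V
  suffices H : ∀ k (d : V), T.isDuke 3 d → Fintype.card V ≤ T.outDeg d + k →
      ∃ u, T.isDuke 3 u ∧ T.part u ≠ T.part d ∧ ¬ T.hasPath 2 d u by
    exact fun d hd => H (Fintype.card V) d hd (by omega)
  intro k
  induction k with
  | zero =>
    intro d hd hcard
    exfalso
    have := T.outDeg_lt_card d
    omega
  | succ k IH =>
    intro d hd hcard
    have hnd2 : ¬ T.isDuke 2 d := fun h => hno2 ⟨d, h⟩
    simp only [isDuke] at hnd2
    push_neg at hnd2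
    obtain ⟨u₀, hu₀p, hu₀2⟩ := hnd2
    suffices Inner : ∀ (j : ℕ) (u : V) (S : Finset V), u ∈ S →
        (∀ s ∈ S, T.part s ≠ T.part d ∧ ¬ T.hasPath 2 d s) →
        (∀ s ∈ S, s ≠ u → T.part s ≠ T.part u → T.peck u s) →
        (∀ s ∈ S, s ≠ u → T.part s = T.part u → ∃ w, T.peck u w ∧ T.peck w s) →
        Fintype.card V ≤ S.card + j →
        ∃ u', T.isDuke 3 u' ∧ T.part u' ≠ T.part d ∧ ¬ T.hasPath 2 d u' by
      refine Inner (Fintype.card V) u₀ {u₀} (Finset.mem_singleton_self u₀) ?_ ?_ ?_ ?_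
      · intro s hs; rw [Finset.mem_singleton] at hs; subst hs; exact ⟨hu₀p, hu₀2⟩
      · intro s hs hne _; rw [Finset.mem_singleton] at hs; exact absurd hs hne
      · intro s hs hne _; rw [Finset.mem_singleton] at hs; exact absurd hs hne
      · simp
    intro j
    induction j with
    | zero =>
      intro u S huS hSB hK1 hK2 hScard
      by_cases hduke : T.isDuke 3 u
      · exact ⟨u, hduke, (hSB u huS).1, (hSB u huS).2⟩
      simp only [isDuke] at hduke
      push_neg at hduke
      obtain ⟨c, hcp, hc3⟩ := hduke
      have hup := (hSB u huS).1
      have hu2 := (hSB u huS).2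
      by_cases hcd : T.part c = T.part d
      · obtain ⟨hcduke, hsub, hcu, hd2c, hdu⟩ := T.caseB_facts hup hu2 hd hcp hc3 hcd
        have hdeg := T.outDeg_lt hsub hcu hdu
        obtain ⟨e, he1, he2, he3⟩ := IH c hcduke (by omega)
        refine ⟨e, he1, by rw [hcd] at he2; exact he2, ?_⟩
        intro h2
        rcases T.path2_cases h2 with rfl | h | ⟨w, h1, hww⟩
        · exact he2 hcd.symm
        · exact he3 (T.path_one one_le_two (hsub e h))
        · exact he3 (T.path_two le_rfl (hsub w h1) hww)
      · obtain ⟨hcB, hcu, hb, h3⟩ := T.caseA_facts hup hu2 hcp hc3 hcd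
        have hcnu : c ≠ u := fun h => hcp (by rw [h])
        have hcnotS : c ∉ S := fun hcS => hc3 (T.path_one (by norm_num) (hK1 c hcS hcnu hcp))
        have hSlt : S.card < Fintype.card V := by
          have hne : S ≠ Finset.univ := fun h => hcnotS (h ▸ Finset.mem_univ c)
          have := Finset.card_lt_card (Finset.ssubset_univ_iff.mpr hne)
          simpa [Finset.card_univ] using this
        exfalso
        omega
    | succ j IHj =>
      intro u S huS hSB hK1 hK2 hScard
      by_cases hduke : T.isDuke 3 u
      · exact ⟨u, hduke, (hSB u huS).1, (hSB u huS).2⟩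
      simp only [isDuke] at hduke
      push_neg at hduke
      obtain ⟨c, hcp, hc3⟩ := hduke
      have hup := (hSB u huS).1
      have hu2 := (hSB u huS).2
      by_cases hcd : T.part c = T.part d
      · obtain ⟨hcduke, hsub, hcu, hd2c, hdu⟩ := T.caseB_facts hup hu2 hd hcp hc3 hcd
        have hdeg := T.outDeg_lt hsub hcu hdu
        obtain ⟨e, he1, he2, he3⟩ := IH c hcduke (by omega)
        refine ⟨e, he1, by rw [hcd] at he2; exact he2, ?_⟩
        intro h2
        rcases T.path2_cases h2 with rfl | h | ⟨w, h1, hww⟩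
        · exact he2 hcd.symm
        · exact he3 (T.path_one one_le_two (hsub e h))
        · exact he3 (T.path_two le_rfl (hsub w h1) hww)
      · obtain ⟨hcB, hcu, hb, h3⟩ := T.caseA_facts hup hu2 hcp hc3 hcd
        have hcnu : c ≠ u := fun h => hcp (by rw [h])
        have hcnotS : c ∉ S := fun hcS => hc3 (T.path_one (by norm_num) (hK1 c hcS hcnu hcp))
        refine IHj c (insert c S) (Finset.mem_insert_self c S) ?_ ?_ ?_ ?_
        · intro s hs
          rcases Finset.mem_insert.mp hs with rfl | hs
          · exact hcB
          · exact hSB s hs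
        · intro s hs hsne hsp
          rcases Finset.mem_insert.mp hs with rfl | hs
          · exact absurd rfl hsne
          · by_cases hsu : s = u
            · subst hsu; exact hcu
            · by_cases hsup : T.part s = T.part u
              · obtain ⟨w, hw1, hw2⟩ := hK2 s hs hsu hsup
                exact h3 w s hw1 hw2 hsp
              · exact hb s (hK1 s hs hsu hsup) hsp
        · intro s hs hsne hsp
          rcases Finset.mem_insert.mp hs with rfl | hs
          · exact absurd rfl hsne
          · have hsu : s ≠ u := fun h => hcp (by rw [← hsp, h])
            have hsup : T.part s ≠ T.part u := by rw [hsp]; exact hcp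
            exact ⟨u, hcu, hK1 s hs hsu hsup⟩
        · have := Finset.card_insert_of_notMem hcnotS
          omega

end MTour

/-- In a multipartite tournament with no 2-Duke containing three distinct
3-Dukes, there is a fourth distinct 3-Duke. -/
theorem stmt7 {V ι : Type*} [Finite V] (T : MTour V ι)
    (hno2 : ¬ ∃ d, T.isDuke 2 d)
    (d₁ d₂ d₃ : V) (h12 : d₁ ≠ d₂) (h13 : d₁ ≠ d₃) (h23 : d₂ ≠ d₃)
    (hd₁ : T.isDuke 3 d₁) (hd₂ : T.isDuke 3 d₂) (hd₃ : T.isDuke 3 d₃) :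
    ∃ d₄, d₄ ≠ d₁ ∧ d₄ ≠ d₂ ∧ d₄ ≠ d₃ ∧ T.isDuke 3 d₄ := by
  classical
  obtain ⟨u₁, hu₁duke, hu₁p, hu₁2⟩ := T.crux hno2 d₁ hd₁
  obtain ⟨u₂, hu₂duke, hu₂p, hu₂2⟩ := T.crux hno2 d₂ hd₂
  obtain ⟨u₃, hu₃duke, hu₃p, hu₃2⟩ := T.crux hno2 d₃ hd₃
  have hp₁ : T.peck u₁ d₁ :=
    (T.complete u₁ d₁ hu₁p).resolve_right (fun h => hu₁2 (T.path_one one_le_two h))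
  have hp₂ : T.peck u₂ d₂ :=
    (T.complete u₂ d₂ hu₂p).resolve_right (fun h => hu₂2 (T.path_one one_le_two h))
  have hp₃ : T.peck u₃ d₃ :=
    (T.complete u₃ d₃ hu₃p).resolve_right (fun h => hu₃2 (T.path_one one_le_two h))
  have hne₁ : u₁ ≠ d₁ := fun h => hu₁p (by rw [h])
  have hne₂ : u₂ ≠ d₂ := fun h => hu₂p (by rw [h])
  have hne₃ : u₃ ≠ d₃ := fun h => hu₃p (by rw [h])
  by_cases h₁ : u₁ ≠ d₂ ∧ u₁ ≠ d₃
  · exact ⟨u₁, hne₁, h₁.1, h₁.2, hu₁duke⟩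
  by_cases h₂ : u₂ ≠ d₁ ∧ u₂ ≠ d₃
  · exact ⟨u₂, h₂.1, hne₂, h₂.2, hu₂duke⟩
  by_cases h₃ : u₃ ≠ d₁ ∧ u₃ ≠ d₂
  · exact ⟨u₃, h₃.1, h₃.2, hne₃, hu₃duke⟩
  exfalso
  push_neg at h₁ h₂ h₃
  have o₁ : u₁ = d₂ ∨ u₁ = d₃ := by
    by_cases e : u₁ = d₂
    · exact Or.inl e
    · exact Or.inr (h₁ e)
  have o₂ : u₂ = d₁ ∨ u₂ = d₃ := by
    by_cases e : u₂ = d₁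
    · exact Or.inl e
    · exact Or.inr (h₂ e)
  have o₃ : u₃ = d₁ ∨ u₃ = d₂ := by
    by_cases e : u₃ = d₁
    · exact Or.inl e
    · exact Or.inr (h₃ e)
  rcases o₁ with rfl | rfl
  · rcases o₂ with rfl | rfl
    · exact T.asymm _ _ hp₁ hp₂
    · rcases o₃ with rfl | rfl
      · exact hu₁2 (T.path_two le_rfl hp₃ hp₂)
      · exact T.asymm _ _ hp₂ hp₃
  · rcases o₃ with rfl | rfl
    · exact T.asymm _ _ hp₁ hp₃
    · rcases o₂ with rfl | rfl
      · exact hu₁2 (T.path_two le_rfl hp₂ hp₃)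
      · exact T.asymm _ _ hp₂ hp₃
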